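/- The polynomial Φ_a ∈ F_p[λ] satisfies the hypergeometric differential equation λ(1−λ)·Φ_a'' + (C − (A+B+1)λ)·Φ_a' − A·B·Φ_a = 0, where A, B, C ∈ F_p are the residues A = −α·a3 mod p, B = −α·a4* mod p (equivalently B = α(a4−m) mod p), and C = −α(a2+a3) mod p, and where ' denotes the formal derivative of polynomials. -/
import Mathlib


open Polynomial

/-- The `a`-Hasse invariant `Φ_a ∈ 𝔽_p[λ]` of a type `a = (a1, a2, a3, a4)` in the mixed case:
`Φ_a(λ) = (-1)^(α a3) ∑_{i+j = α a3} C(α a2*, i) C(α a4*, j) λ^j` where `α = (p-1)/m` and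
`a_i* = m - a_i`. -/
noncomputable def HasseInv (p m a2 a3 a4 : ℕ) : Polynomial (ZMod p) :=
  let α := (p - 1) / m
  C ((-1 : ZMod p) ^ (α * a3)) *
    ∑ j ∈ Finset.range (α * a3 + 1),
      C ((Nat.choose (α * (m - a2)) (α * a3 - j) * Nat.choose (α * (m - a4)) j : ℕ) : ZMod p) *
        X ^ j


lemma hyperODE {R : Type*} [CommRing R] (f : R[X]) (A B Cc : R)
    (h : ∀ n : ℕ, f.coeff (n+1) * (((n:R)+1) * ((n:R) + Cc)) =
      f.coeff n * (((n:R)+A) * ((n:R)+B))) :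
    X * (1 - X) * derivative (derivative f) +
      (C Cc - C (A + B + 1) * X) * derivative f - C (A * B) * f = 0 := by
  have key : X * (1 - X) * derivative (derivative f) +
      (C Cc - C (A + B + 1) * X) * derivative f - C (A * B) * f
      = X * derivative (derivative f) - X * (X * derivative (derivative f))
        + (C Cc * derivative f - C (A+B+1) * (X * derivative f)) - C (A*B) * f := by
    ring
  rw [key]
  ext n
  rcases n with _ | n
  · simp only [coeff_sub, coeff_add, mul_coeff_zero, coeff_X_zero, zero_mul, coeff_C_mul,
      coeff_derivative, coeff_zero, Nat.cast_zero, coeff_C_zero]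
    have := h 0
    push_cast at this
    simp only [zero_add] at this
    linear_combination this
  · simp only [coeff_sub, coeff_add, coeff_X_mul, coeff_C_mul, coeff_derivative, coeff_zero]
    rcases n with _ | n
    · simp only [mul_coeff_zero, coeff_X_zero, zero_mul, Nat.cast_zero, Nat.cast_one,
        coeff_C_zero]
      have h1 := h 1
      push_cast at h1
      linear_combination h1
    · simp only [coeff_X_mul, coeff_derivative]
      have hrec := h (n + 2)
      push_cast at hrec ⊢
      linear_combination hrec

lemma coeffSum {R : Type*} [CommRing R] (N : ℕ) (g : ℕ → R) (k : ℕ) :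
    (∑ j ∈ Finset.range (N+1), C (g j) * X^j).coeff k = if k < N+1 then g k else 0 := by
  simp only [finset_sum_coeff, coeff_C_mul, coeff_X_pow, mul_ite, mul_one, mul_zero]
  rw [Finset.sum_ite_eq (Finset.range (N+1)) k g]
  simp [Finset.mem_range]

lemma aux1 {p : ℕ} (P k : ℕ) :
    ((P.choose (k+1) : ℕ) : ZMod p) * ((k : ZMod p)+1) =
      (P.choose k : ZMod p) * ((P : ZMod p) - k) := by
  rcases le_or_gt k P with h | h
  · have h2 := Nat.choose_succ_right_eq P k
    have : ((P.choose (k+1) * (k+1) : ℕ) : ZMod p) = ((P.choose k * (P - k) : ℕ) : ZMod p) := by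
      rw [h2]
    push_cast [h] at this
    linear_combination this
  · simp [Nat.choose_eq_zero_of_lt h, Nat.choose_eq_zero_of_lt (Nat.lt_succ_of_lt h)]


/-- `Φ_a` satisfies the hypergeometric differential equation
`λ(1-λ)u'' + (C - (A+B+1)λ)u' - ABu = 0` with `A = -α a3`, `B = α(a4 - m)`,
`C = -α(a2+a3)` in `𝔽_p`. -/
theorem stmt5 (p m a1 a2 a3 a4 : ℕ) (hp : p.Prime) [Fact p.Prime] (hp2 : 2 < p)
    (hm1 : 1 < m) (hmd : m ∣ p - 1)
    (h1 : 0 < a1 ∧ a1 < m) (h2 : 0 < a2 ∧ a2 < m) (h3 : 0 < a3 ∧ a3 < m)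
    (h4 : 0 < a4 ∧ a4 < m) (hsum : a1 + a2 + a3 + a4 = 2 * m)
    (A B Cc : ZMod p)
    (hA : A = -(((p - 1) / m * a3 : ℕ) : ZMod p))
    (hB : B = -(((p - 1) / m * (m - a4) : ℕ) : ZMod p))
    (hC : Cc = -(((p - 1) / m * (a2 + a3) : ℕ) : ZMod p)) :
    X * (1 - X) * derivative (derivative (HasseInv p m a2 a3 a4)) +
      (Polynomial.C Cc - Polynomial.C (A + B + 1) * X) * derivative (HasseInv p m a2 a3 a4) -
      Polynomial.C (A * B) * HasseInv p m a2 a3 a4 = 0 := by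
  set α := (p - 1) / m with hα
  set N := α * a3 with hN
  set P := α * (m - a2) with hP
  set Q := α * (m - a4) with hQ
  have hcoeff : ∀ k : ℕ, (HasseInv p m a2 a3 a4).coeff k =
      (-1 : ZMod p) ^ N *
        (if k < N + 1 then ((P.choose (N - k) * Q.choose k : ℕ) : ZMod p) else 0) := by
    intro k
    show (Polynomial.C ((-1 : ZMod p) ^ N) *
      ∑ j ∈ Finset.range (N + 1),
        Polynomial.C ((P.choose (N - j) * Q.choose j : ℕ) : ZMod p) * X ^ j).coeff k = _
    rw [coeff_C_mul, coeffSum]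
  -- basic casts
  have hαm : ((α * m : ℕ) : ZMod p) = -1 := by
    rw [hα, Nat.div_mul_cancel hmd]
    have : ((p - 1 : ℕ) : ZMod p) = (p : ZMod p) - 1 := by
      have : 1 ≤ p := hp.one_lt.le
      push_cast [this]
      ring
    rw [this, ZMod.natCast_self]
    ring
  have hPc : ((P : ℕ) : ZMod p) = -1 - ((α * a2 : ℕ) : ZMod p) := by
    rw [hP]
    have : α * (m - a2) = α * m - α * a2 := Nat.mul_sub α m a2
    rw [this, Nat.cast_sub (by have := h2.2.le; exact Nat.mul_le_mul_left α (by omega)), hαm]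
  apply hyperODE
  intro n
  rw [hcoeff, hcoeff]
  rcases lt_or_ge n N with hn | hn
  · rw [if_pos (by omega), if_pos (by omega)]
    set i := N - n with hi
    have hi1 : 1 ≤ i := by omega
    have hNn1 : N - (n + 1) = i - 1 := by omega
    rw [hNn1]
    -- key cast identities
    have hcastI : ((i : ℕ) : ZMod p) = (N : ZMod p) - n := by
      rw [hi, Nat.cast_sub hn.le]
    have hcastI1 : ((i - 1 : ℕ) : ZMod p) = (N : ZMod p) - n - 1 := by
      rw [Nat.cast_sub hi1, hcastI]; push_cast; ring
    have hCc' : (n : ZMod p) + Cc = (P : ZMod p) - ((i - 1 : ℕ) : ZMod p) := by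
      rw [hC, hcastI1, hPc]
      have : ((α * (a2 + a3) : ℕ) : ZMod p) = ((α * a2 : ℕ) : ZMod p) + ((N : ℕ) : ZMod p) := by
        rw [hN]; push_cast; ring
      rw [this]
      ring
    have hA' : (n : ZMod p) + A = -((i : ℕ) : ZMod p) := by
      rw [hA, hcastI]; ring
    have hB' : (n : ZMod p) + B = (n : ZMod p) - (Q : ZMod p) := by
      rw [hB]; ring
    rw [hCc', hA', hB']
    have e1 : (P.choose ((i-1)+1) : ZMod p) * (((i-1 : ℕ) : ZMod p)+1) =
        (P.choose (i-1) : ZMod p) * ((P : ZMod p) - ((i-1 : ℕ) : ZMod p)) := aux1 P (i-1)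
    rw [Nat.sub_add_cancel hi1] at e1
    have e2 : (Q.choose (n+1) : ZMod p) * ((n : ZMod p)+1) =
        (Q.choose n : ZMod p) * ((Q : ZMod p) - n) := aux1 Q n
    have hicast : (((i-1 : ℕ)) : ZMod p) + 1 = ((i : ℕ) : ZMod p) := by
      rw [Nat.cast_sub hi1]; ring
    rw [hicast] at e1
    push_cast
    linear_combination (-((-1:ZMod p)^(α*a3) * (Q.choose (n+1) : ZMod p) * ((n:ZMod p)+1))) * e1 +
      ((-1:ZMod p)^(α*a3) * (P.choose i : ZMod p) * ((i : ℕ) : ZMod p)) * e2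
  · -- n ≥ N
    rw [if_neg (by omega)]
    rcases eq_or_lt_of_le hn with hEq | hlt
    · rw [if_pos (by omega)]
      have : (n : ZMod p) + A = 0 := by rw [hA, ← hEq]; ring
      rw [this]
      ring
    · rw [if_neg (by omega)]
      ring
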